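/- For every n ∈ ℕ divisible by 4, there is an n-vertex graph G with δ(G) = 3n/4 and an edge labelling f: E(G) → {−1,1} for which every Hamilton cycle of G has discrepancy 0 (with respect to f). -/

import Mathlib

section Aux

open Finset SimpleGraph

private lemma aux_sum_map_add {V : Type*} {G : SimpleGraph V} (H : V → ℤ) :
    ∀ l : List G.Dart,
      (l.map fun d => H d.fst + H d.snd).sum
        = (l.map fun d => H d.fst).sum + (l.map fun d => H d.snd).sum := by
  intro l
  induction l with
  | nil => simp
  | cons a l ih => simp [ih]; ring

end Aux

/-- For every `n` divisible by `4` there is an `n`-vertex graph `G` with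
`δ(G) = 3n/4` and a `±1` edge labelling for which every Hamilton cycle has
discrepancy `0`. -/
theorem exists_graph_all_hamilton_zero_discrepancy (n : ℕ) (hn : 4 ∣ n) :
    ∃ G : SimpleGraph (Fin n),
      ((@SimpleGraph.minDegree (Fin n) G _ (Classical.decRel G.Adj) : ℕ) : ℝ) = 3 * n / 4 ∧
      ∃ f : Sym2 (Fin n) → ℤ, (∀ e ∈ G.edgeSet, f e = 1 ∨ f e = -1) ∧
        ∀ (u : Fin n) (p : G.Walk u u), p.IsHamiltonianCycle →
          ∑ e ∈ p.edges.toFinset, f e = 0 := by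
  classical
  obtain ⟨k, rfl⟩ := hn
  -- the graph: complete graph minus the edges inside `A = {v | v.val < k}`
  set G : SimpleGraph (Fin (4 * k)) :=
    { Adj := fun u v => u ≠ v ∧ ¬((u : ℕ) < k ∧ (v : ℕ) < k)
      symm := by
        constructor
        intro u v h
        exact ⟨h.1.symm, fun hc => h.2 ⟨hc.2, hc.1⟩⟩
      loopless := ⟨fun v h => h.1 rfl⟩ } with hG
  have hAdj : ∀ u v : Fin (4 * k),
      G.Adj u v ↔ u ≠ v ∧ ¬((u : ℕ) < k ∧ (v : ℕ) < k) := fun _ _ => Iff.rfl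
  have hquot : (4 * k) / 4 = k := by omega
  refine ⟨G, ?_, ?_⟩
  · -- the minimum degree computation
    rcases Nat.eq_zero_or_pos k with rfl | hk
    · -- n = 0
      simp only [Nat.mul_zero]
      have : IsEmpty (Fin (4 * 0)) := by simp; infer_instance
      rw [@SimpleGraph.minDegree]
      simp
    · haveI : Nonempty (Fin (4 * k)) := ⟨⟨0, by omega⟩⟩
      letI inst : DecidableRel G.Adj := Classical.decRel G.Adj
      have hklt : k < 4 * k := by omega
      have hcard : (Finset.univ.filter fun v : Fin (4 * k) => (v : ℕ) < k).card = k := by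
        have h1 : (Finset.univ.filter fun v : Fin (4 * k) => (v : ℕ) < k)
            = Finset.Iio (⟨k, hklt⟩ : Fin (4 * k)) := by
          rw [← Finset.filter_gt_eq_Iio]
          apply Finset.filter_congr
          intro v _
          simp [Fin.lt_def]
        rw [h1, Fin.card_Iio]
      have hdeg : ∀ v : Fin (4 * k),
          G.degree v = if (v : ℕ) < k then 4 * k - k else 4 * k - 1 := by
        intro v
        rw [← SimpleGraph.card_neighborFinset_eq_degree, SimpleGraph.neighborFinset_eq_filter]
        by_cases hv : (v : ℕ) < k
        · rw [if_pos hv]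
          have h1 : (Finset.univ.filter fun w => G.Adj v w)
              = Finset.univ.filter fun w : Fin (4 * k) => ¬ (w : ℕ) < k := by
            apply Finset.filter_congr
            intro w _
            constructor
            · intro h
              intro hw
              exact h.2 ⟨hv, hw⟩
            · intro h
              refine ⟨fun hc => h (hc ▸ hv), fun hc => h hc.2⟩
          rw [h1, Finset.filter_not, Finset.card_sdiff_of_subset (Finset.filter_subset _ _), hcard]
          simp
        · rw [if_neg hv]
          have h1 : (Finset.univ.filter fun w => G.Adj v w)
              = Finset.univ.erase v := by
            rw [← Finset.filter_ne']
            apply Finset.filter_congr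
            intro w _
            constructor
            · intro h; exact h.1.symm
            · intro h; exact ⟨Ne.symm h, fun hc => hv hc.1⟩
          rw [h1, Finset.card_erase_of_mem (Finset.mem_univ v)]
          simp
      have hmin : G.minDegree = 4 * k - k := by
        apply le_antisymm
        · have := SimpleGraph.minDegree_le_degree G (⟨0, by omega⟩ : Fin (4 * k))
          rwa [hdeg, if_pos (by simpa using hk)] at this
        · apply SimpleGraph.le_minDegree_of_forall_le_degree
          intro v
          rw [hdeg]
          split <;> omega
      rw [hmin]
      have : (4 * k - k : ℕ) = 3 * k := by omega
      rw [this]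
      push_cast
      ring
  · -- the labelling
    set H : Fin (4 * k) → ℤ := fun v => if (v : ℕ) < k then -3 else 1 with hH
    refine ⟨Sym2.lift ⟨fun u v => (H u + H v) / 2, by intro u v; dsimp only; rw [add_comm]⟩, ?_, ?_⟩
    · rintro e he
      induction e with
      | h u v =>
        rw [SimpleGraph.mem_edgeSet] at he
        obtain ⟨hne, hno⟩ := he
        simp only [Sym2.lift_mk]
        by_cases hu : (u : ℕ) < k <;> by_cases hv : (v : ℕ) < k
        · exact absurd ⟨hu, hv⟩ hno
        · right; simp [hH, hu, hv]
        · right; simp [hH, hu, hv]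
        · left; simp [hH, hu, hv]
    · intro u p hp
      set f : Sym2 (Fin (4 * k)) → ℤ :=
        Sym2.lift ⟨fun u v => (H u + H v) / 2, by intro u v; dsimp only; rw [add_comm]⟩ with hf
      have hnodup : p.edges.Nodup := hp.isCycle.edges_nodup
      rw [List.sum_toFinset _ hnodup]
      -- pointwise: 2 * f on a dart's edge equals H fst + H snd
      have hpt : ∀ d : G.Dart, 2 * f d.edge = H d.fst + H d.snd := by
        intro d
        have hadj := d.adj
        obtain ⟨hne, hno⟩ := hadj
        have : f d.edge = (H d.fst + H d.snd) / 2 := by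
          rw [SimpleGraph.Dart.edge]
          exact Sym2.lift_mk _ _ _
        rw [this]
        by_cases hu : ((d.fst : Fin (4 * k)) : ℕ) < k <;>
          by_cases hv : ((d.snd : Fin (4 * k)) : ℕ) < k
        · exact absurd ⟨hu, hv⟩ hno
        · simp [hH, hu, hv]
        · simp [hH, hu, hv]
        · simp [hH, hu, hv]
      have hedges : p.edges = p.darts.map SimpleGraph.Dart.edge := rfl
      have key : 2 * (p.edges.map f).sum
          = (p.support.dropLast.map H).sum + (p.support.tail.map H).sum := by
        rw [hedges, List.map_map, ← List.sum_map_mul_left]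
        have : (p.darts.map fun d => 2 * (f ∘ SimpleGraph.Dart.edge) d)
            = p.darts.map fun d => H d.fst + H d.snd := by
          apply List.map_congr_left
          intro d _
          exact hpt d
        rw [this, aux_sum_map_add, ← SimpleGraph.Walk.map_fst_darts,
          ← SimpleGraph.Walk.map_snd_darts, List.map_map, List.map_map]
        rfl
      -- tail sum equals sum over univ
      have hcount : ∀ v, p.support.tail.count v = 1 := by
        intro v
        rw [← SimpleGraph.Walk.support_tail_of_not_nil p hp.isCycle.not_nil]
        exact hp.isHamiltonian_tail v
      have htf : p.support.tail.toFinset = Finset.univ := by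
        apply Finset.eq_univ_of_forall
        intro v
        rw [List.mem_toFinset, ← List.count_pos_iff, hcount]
        norm_num
      have htail : (p.support.tail.map H).sum = ∑ v, H v := by
        rw [Finset.sum_list_map_count, htf]
        apply Finset.sum_congr rfl
        intro v _
        rw [hcount]
        simp
      -- dropLast sum equals tail sum
      have hdrop : (p.support.dropLast.map H).sum = (p.support.tail.map H).sum := by
        have h1 : (p.support.map H).sum = (p.support.dropLast.map H).sum + H u := by
          conv_lhs => rw [← List.dropLast_append_getLast p.support_ne_nil]
          rw [List.map_append, List.sum_append]
          simp [SimpleGraph.Walk.getLast_support]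
        have h2 : (p.support.map H).sum = H u + (p.support.tail.map H).sum := by
          conv_lhs => rw [p.support_eq_cons]
          rw [List.map_cons, List.sum_cons]
        omega
      -- sum over univ is zero
      have huniv : ∑ v, H v = 0 := by
        rw [hH]
        rw [Finset.sum_ite]
        simp only [Finset.sum_const, smul_eq_mul]
        rcases Nat.eq_zero_or_pos k with rfl | hk
        · simp
        · have hklt : k < 4 * k := by omega
          have hcard : (Finset.univ.filter fun v : Fin (4 * k) => (v : ℕ) < k).card = k := by
            have h1 : (Finset.univ.filter fun v : Fin (4 * k) => (v : ℕ) < k)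
                = Finset.Iio (⟨k, hklt⟩ : Fin (4 * k)) := by
              rw [← Finset.filter_gt_eq_Iio]
              apply Finset.filter_congr
              intro v _
              simp [Fin.lt_def]
            rw [h1, Fin.card_Iio]
          have hcard2 : (Finset.univ.filter fun v : Fin (4 * k) => ¬ (v : ℕ) < k).card
              = 3 * k := by
            rw [Finset.filter_not, Finset.card_sdiff_of_subset (Finset.filter_subset _ _), hcard]
            simp; omega
          rw [hcard, hcard2]
          ring
      rw [hdrop, htail, huniv] at key
      have key2 : (p.edges.map f).sum = 0 := by omega
      exact key2
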